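/- Let K be a compact scattered topological space, with compact open sets V_t (t ∈ K) fixed so that V_t ∩ K^(α(t)) = {t}, and let H be a nonempty closed subset of K. If A and B are admissible finite subsets of K with A ⊆ H ⊆ V_A and B ⊆ H ⊆ V_B, then A = B. -/

import Mathlib

universe u

open Set

/-- Iterated derived sets: `K^(0) = K` and `K^(γ) = ⋂_{α<γ} (K^(α))'` for `γ > 0`. -/
noncomputable def iterDerived (K : Type u) [TopologicalSpace K] : Ordinal.{u} → Set K :=
  fun γ =>
    if γ = 0 then Set.univ
    else ⋂ α : {α : Ordinal.{u} // α < γ}, derivedSet (iterDerived K α.1)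
termination_by γ => γ
decreasing_by exact α.2

/-- A topological space is scattered if every nonempty closed subset has an isolated point. -/
def IsScattered (K : Type u) [TopologicalSpace K] : Prop :=
  ∀ C : Set K, IsClosed C → C.Nonempty → ∃ x ∈ C, x ∉ derivedSet C

/-- A finite set `A` is admissible (w.r.t. the family `V`) if `s ∉ V t` whenever
`s` and `t` are distinct elements of `A`. -/
def Admissible {K : Type u} (V : K → Set K) (A : Finset K) : Prop :=
  ∀ s ∈ A, ∀ t ∈ A, s ≠ t → s ∉ V t

lemma iterDerived_eq (K : Type u) [TopologicalSpace K] (γ : Ordinal.{u}) :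
    iterDerived K γ =
      if γ = 0 then Set.univ
      else ⋂ α : {α : Ordinal.{u} // α < γ}, derivedSet (iterDerived K α.1) := by
  rw [iterDerived]

lemma iterDerived_anti (K : Type u) [TopologicalSpace K] {β γ : Ordinal.{u}} (h : β ≤ γ) :
    iterDerived K γ ⊆ iterDerived K β := by
  intro x hx
  rcases eq_or_ne β 0 with hβ | hβ
  · rw [iterDerived_eq, if_pos hβ]; trivial
  · have hγ : γ ≠ 0 := fun hg => hβ (le_antisymm (hg ▸ h) (zero_le (a := β)))
    rw [iterDerived_eq, if_neg hγ] at hx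
    rw [iterDerived_eq, if_neg hβ]
    rw [Set.mem_iInter] at hx ⊢
    exact fun a => hx ⟨a.1, lt_of_lt_of_le a.2 h⟩

theorem stmt_2 (K : Type u) [TopologicalSpace K] [CompactSpace K]
    (hscat : IsScattered K)
    (α : K → Ordinal.{u})
    (hα : ∀ t, t ∈ iterDerived K (α t) ∧ t ∉ iterDerived K (α t + 1))
    (V : K → Set K)
    (hVcomp : ∀ t, IsCompact (V t)) (hVopen : ∀ t, IsOpen (V t))
    (hV : ∀ t, V t ∩ iterDerived K (α t) = {t})
    (H : Set K) (hHcl : IsClosed H) (hHne : H.Nonempty)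
    (A B : Finset K)
    (hA : Admissible V A) (hB : Admissible V B)
    (hAH : (A : Set K) ⊆ H) (hHA : H ⊆ ⋃ t ∈ A, V t)
    (hBH : (B : Set K) ⊆ H) (hHB : H ⊆ ⋃ t ∈ B, V t) :
    A = B := by
  classical
  -- If `a ∈ V b` and `α b ≤ α a` then `a = b`.
  have eqlem : ∀ a b : K, a ∈ V b → α b ≤ α a → a = b := by
    intro a b hab hle
    have : a ∈ V b ∩ iterDerived K (α b) :=
      ⟨hab, iterDerived_anti K hle (hα a).1⟩
    rw [hV b] at this
    exact this
  have key : ∀ (A B : Finset K), Admissible V A → (↑A : Set K) ⊆ H →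
      H ⊆ ⋃ t ∈ B, V t →
      ∀ c, c ∈ A → c ∉ B → (∀ x ∈ B, x ∉ A → α x ≤ α c) → False := by
    intro A B hA hAH hHB c hcA hcB hmax
    obtain ⟨b, hbB, hcVb⟩ : ∃ b ∈ B, c ∈ V b := by
      simpa using hHB (hAH hcA)
    have hcb : c ≠ b := fun h => hcB (h ▸ hbB)
    have hbA : b ∉ A := fun hbA => hA c hcA b hbA hcb hcVb
    exact hcb (eqlem c b hcVb (hmax b hbB hbA))
  by_contra hne
  have hD : ((A \ B) ∪ (B \ A) : Finset K).Nonempty := by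
    rcases Finset.eq_empty_or_nonempty ((A \ B) ∪ (B \ A)) with h | h
    · exact absurd (Finset.ext fun x => by
        constructor
        · intro hx
          by_contra hxB
          have : x ∈ (A \ B) ∪ (B \ A) := Finset.mem_union_left _ (Finset.mem_sdiff.2 ⟨hx, hxB⟩)
          simp [h] at this
        · intro hx
          by_contra hxA
          have : x ∈ (A \ B) ∪ (B \ A) := Finset.mem_union_right _ (Finset.mem_sdiff.2 ⟨hx, hxA⟩)
          simp [h] at this) hne
    · exact h
  obtain ⟨c, hcD, hmax⟩ := Finset.exists_max_image ((A \ B) ∪ (B \ A)) α hD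
  rcases Finset.mem_union.1 hcD with hc | hc
  · rcases Finset.mem_sdiff.1 hc with ⟨hcA, hcB⟩
    exact key A B hA hAH hHB c hcA hcB fun x hxB hxA =>
      hmax x (Finset.mem_union_right _ (Finset.mem_sdiff.2 ⟨hxB, hxA⟩))
  · rcases Finset.mem_sdiff.1 hc with ⟨hcB, hcA⟩
    exact key B A hB hBH hHA c hcB hcA fun x hxA hxB =>
      hmax x (Finset.mem_union_left _ (Finset.mem_sdiff.2 ⟨hxA, hxB⟩))
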